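/- The map φ_B that sends a Dyck path P = p_1 p_2 ⋯ p_{2n} of size n with all peaks at even height to the word u_1 ⋯ u_n with u_j = U if p_{2j−1}p_{2j} = NN, u_j = H if p_{2j−1}p_{2j} = EN, and u_j = D if p_{2j−1}p_{2j} = EE, is a bijection onto the set of Riordan paths of length n (Motzkin paths with no horizontal step at height 0). -/

import Mathlib

/-- A Dyck path of size `n`: a list of booleans (`true` = north step, `false` = east step)
from `(0,0)` to `(n,n)` staying weakly above the diagonal `y = x`. -/
def IsDyckPath (n : ℕ) (w : List Bool) : Prop :=
  w.length = 2 * n ∧ w.count true = n ∧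
    ∀ k, (w.take k).count false ≤ (w.take k).count true

/-- The `y`-coordinate of the lattice point reached after `k` steps. -/
def ycoord (w : List Bool) (k : ℕ) : ℕ := (w.take k).count true

/-- The `x`-coordinate of the lattice point reached after `k` steps. -/
def xcoord (w : List Bool) (k : ℕ) : ℕ := (w.take k).count false

/-- A peak: a north step at position `i` followed by an east step. -/
def IsPeak (w : List Bool) (i : ℕ) : Prop := w[i]? = some true ∧ w[i+1]? = some false

/-- A valley: an east step at position `i` followed by a north step. -/
def IsValley (w : List Bool) (i : ℕ) : Prop := w[i]? = some false ∧ w[i+1]? = some true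

/-- Height above the diagonal after `k` steps. -/
def pdepth (w : List Bool) (k : ℕ) : ℤ := (ycoord w k : ℤ) - (xcoord w k : ℤ)

/-- Step `i` (a north step) of `w` is matched with step `j` (an east step):
the facing east step at the same height (balanced-parentheses matching). -/
def Matches (w : List Bool) (i j : ℕ) : Prop :=
  i < j ∧ w[i]? = some true ∧ w[j]? = some false ∧
    pdepth w (j + 1) = pdepth w i ∧ ∀ k, i < k → k ≤ j → pdepth w i < pdepth w k

/-- The graph on `m` points whose edges are the upper arches and the lower arches;
its connected components are the components of the corresponding meander. -/
def meanderGraph (m : ℕ) (upper lower : ℕ → ℕ → Prop) : SimpleGraph (Fin m) where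
  Adj i j := i ≠ j ∧ (upper i.1 j.1 ∨ upper j.1 i.1 ∨ lower i.1 j.1 ∨ lower j.1 i.1)
  symm := by
    constructor
    intro i j h
    exact ⟨h.1.symm, by tauto⟩
  loopless := by
    constructor
    intro i h
    exact h.1 rfl

/-- The number of components of the meander with the matching of `P` above and the
matching of `Q` below. -/
noncomputable def trajPQ (n : ℕ) (P Q : List Bool) : ℕ :=
  Nat.card (meanderGraph (2 * n) (Matches P) (Matches Q)).ConnectedComponent

/-- The number of components of the meander with the matching of `P` above and the
rainbow matching `i ↦ 2n - 1 - i` below. -/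
noncomputable def traj (n : ℕ) (P : List Bool) : ℕ :=
  Nat.card (meanderGraph (2 * n) (Matches P)
    (fun i j => i + j + 1 = 2 * n)).ConnectedComponent

/-- No peak with even `y`-coordinate and no valley with odd `x`-coordinate. -/
def NoBadCorner (w : List Bool) : Prop :=
  (∀ i, IsPeak w i → Odd (ycoord w (i + 1))) ∧
  (∀ i, IsValley w i → Even (xcoord w (i + 1)))

/-- A bad corner: a peak with even `y`-coordinate or a valley with odd `x`-coordinate. -/
def IsBadCorner (w : List Bool) (i : ℕ) : Prop :=
  (IsPeak w i ∧ Even (ycoord w (i + 1))) ∨ (IsValley w i ∧ Odd (xcoord w (i + 1)))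

/-- Interchange the two steps of the corner at positions `i`, `i+1`. -/
def swapCorner (w : List Bool) (i : ℕ) : List Bool :=
  (w.set i (w.getD (i + 1) true)).set (i + 1) (w.getD i true)

open Classical in
/-- The involution `φ`: swap the two steps of the first bad corner, if any. -/
noncomputable def phiMap (w : List Bool) : List Bool :=
  if h : ∃ i, IsBadCorner w i then swapCorner w (Nat.find h) else w

/-- The number of unit squares between a Dyck path and the diagonal `y = x`. -/
def area (w : List Bool) : ℕ :=
  ((List.range w.length).map fun i =>
    if w.getD i true then 0 else ycoord w i - xcoord w i - 1).sum

/-- The zigzag Dyck path `(NE)^m`. -/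
def zigzag (m : ℕ) : List Bool := (List.replicate m [true, false]).flatten

/-- `N^{2a_1} E^{2b_1} ⋯ N^{2a_t} E^{2b_t}` for `ab = [(a_1,b_1),…,(a_t,b_t)]`. -/
def doubledWord (ab : List (ℕ × ℕ)) : List Bool :=
  (ab.map fun p => List.replicate (2 * p.1) true ++ List.replicate (2 * p.2) false).flatten

/-- `N^{a_1} E^{b_1} ⋯ N^{a_t} E^{b_t}` for `ab = [(a_1,b_1),…,(a_t,b_t)]`. -/
def halfWord (ab : List (ℕ × ℕ)) : List Bool :=
  (ab.map fun p => List.replicate p.1 true ++ List.replicate p.2 false).flatten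

/-- All peaks at odd height (`height` = `y - x` at the peak's lattice point). -/
def AllPeaksOdd (w : List Bool) : Prop :=
  ∀ i, IsPeak w i → Odd (ycoord w (i + 1) - xcoord w (i + 1))

/-- All peaks at even height. -/
def AllPeaksEven (w : List Bool) : Prop :=
  ∀ i, IsPeak w i → Even (ycoord w (i + 1) - xcoord w (i + 1))

/-- Steps of a Motzkin path: up, horizontal, down. -/
inductive MStep | U | H | D
deriving DecidableEq

/-- The total height change along a list of Motzkin steps. -/
def msum (l : List MStep) : ℤ :=
  (l.map fun s => match s with | MStep.U => 1 | MStep.H => 0 | MStep.D => -1).sum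

/-- A Motzkin path of length `n`. -/
def IsMotzkin (n : ℕ) (l : List MStep) : Prop :=
  l.length = n ∧ msum l = 0 ∧ ∀ k, 0 ≤ msum (l.take k)

/-- A Riordan path of length `n`: a Motzkin path with no horizontal step on the `x`-axis. -/
def IsRiordan (n : ℕ) (l : List MStep) : Prop :=
  IsMotzkin n l ∧ ∀ i, l[i]? = some MStep.H → msum (l.take i) ≠ 0

/-- The map `φ_A` from Dyck paths of size `n+1` (all peaks at odd height)
to Motzkin paths of length `n`: `v_j` is read off from steps `p_{2j} p_{2j+1}`. -/
def phiA (n : ℕ) (P : List Bool) : List MStep :=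
  (List.range n).map fun j =>
    match P.getD (2 * j + 1) true, P.getD (2 * j + 2) true with
    | true, true => MStep.U
    | false, true => MStep.H
    | _, _ => MStep.D

/-- The map `φ_B` from Dyck paths of size `n` (all peaks at even height)
to Riordan paths of length `n`: `u_j` is read off from steps `p_{2j-1} p_{2j}`. -/
def phiB (n : ℕ) (P : List Bool) : List MStep :=
  (List.range n).map fun j =>
    match P.getD (2 * j) true, P.getD (2 * j + 1) true with
    | true, true => MStep.U
    | false, true => MStep.H
    | _, _ => MStep.D

namespace PhiBAux

/-- The value of a Motzkin step. -/
def mval : MStep → ℤ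
  | .U => 1 | .H => 0 | .D => -1

lemma msum_eq (l : List MStep) : msum l = (l.map mval).sum := rfl


@[simp] lemma msum_nil : msum [] = 0 := rfl

@[simp] lemma msum_cons (s : MStep) (l : List MStep) : msum (s :: l) = mval s + msum l := by
  simp [msum_eq]

/-- The two Dyck steps encoding a Motzkin step. -/
def stepPair : MStep → List Bool
  | .U => [true, true] | .H => [false, true] | .D => [false, false]

/-- The inverse map of `φ_B`. -/
def psiB (l : List MStep) : List Bool := (l.map stepPair).flatten

@[simp] lemma psiB_nil : psiB [] = [] := rfl

@[simp] lemma psiB_cons (s : MStep) (l : List MStep) :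
    psiB (s :: l) = stepPair s ++ psiB l := rfl

@[simp] lemma length_stepPair (s : MStep) : (stepPair s).length = 2 := by cases s <;> rfl

@[simp] lemma length_psiB (l : List MStep) : (psiB l).length = 2 * l.length := by
  induction l with
  | nil => rfl
  | cons s l ih => cases s <;> simp [psiB_cons, ih, stepPair] <;> ring

lemma countT_psiB (l : List MStep) :
    ((psiB l).count true : ℤ) = l.length + msum l := by
  induction l with
  | nil => simp
  | cons s l ih => cases s <;> simp [stepPair, List.count_append, ih, mval] <;> push_cast <;> ring_nf <;> omega

lemma countF_psiB (l : List MStep) :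
    ((psiB l).count false : ℤ) = l.length - msum l := by
  induction l with
  | nil => simp
  | cons s l ih => cases s <;> simp [stepPair, List.count_append, ih, mval] <;> push_cast <;> ring_nf <;> omega

lemma take_psiB_even (l : List MStep) (k : ℕ) :
    (psiB l).take (2 * k) = psiB (l.take k) := by
  induction l generalizing k with
  | nil => simp
  | cons s l ih =>
    cases k with
    | zero => simp
    | succ k =>
      have h2 : 2 * (k + 1) = (2 * k) + 1 + 1 := by ring
      cases s <;>
        simp [stepPair, h2, List.take_succ_cons, ih]

lemma pdepth_psiB_even (l : List MStep) (k : ℕ) :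
    pdepth (psiB l) (2 * k) = 2 * msum (l.take k) := by
  unfold pdepth ycoord xcoord
  rw [take_psiB_even, ]
  have h1 := countT_psiB (l.take k)
  have h2 := countF_psiB (l.take k)
  omega

lemma take_psiB_odd (l : List MStep) (k : ℕ) (h : k < l.length) :
    (psiB l).take (2 * k + 1) = psiB (l.take k) ++ (stepPair l[k]).take 1 := by
  induction l generalizing k with
  | nil => simp at h
  | cons s l ih =>
    cases k with
    | zero => cases s <;> simp [stepPair]
    | succ k =>
      have h2 : 2 * (k + 1) + 1 = (2 * (k : ℕ) + 1) + 1 + 1 := by ring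
      cases s <;>
        simp [stepPair, h2, List.take_succ_cons, ih k (by simpa using h)]

lemma pdepth_psiB_odd (l : List MStep) (k : ℕ) (h : k < l.length) :
    pdepth (psiB l) (2 * k + 1) =
      2 * msum (l.take k) + (if l[k] = MStep.U then 1 else -1) := by
  unfold pdepth ycoord xcoord
  rw [take_psiB_odd l k h]
  have h1 := countT_psiB (l.take k)
  have h2 := countF_psiB (l.take k)
  rcases hs : l[k] with _ | _ | _ <;>
    simp [stepPair, List.count_append, hs] <;> omega

lemma msum_take_succ (l : List MStep) (k : ℕ) (h : k < l.length) :
    msum (l.take (k + 1)) = msum (l.take k) + mval l[k] := by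
  rw [List.take_succ, msum_eq, msum_eq, List.map_append, List.sum_append]
  simp [List.getElem?_eq_getElem h]

lemma count_true_add_false (w : List Bool) : w.count true + w.count false = w.length := by
  induction w with
  | nil => rfl
  | cons b w ih => cases b <;> simp [ih] <;> omega

lemma getElem_psiB_even (l : List MStep) (j : ℕ) :
    (psiB l)[2 * j]? = l[j]?.map fun s => match s with | .U => true | _ => false := by
  induction l generalizing j with
  | nil => simp
  | cons s l ih =>
    cases j with
    | zero => cases s <;> simp [stepPair]
    | succ j =>
      have h2 : 2 * (j + 1) = (2 * j) + 1 + 1 := by ring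
      cases s <;> simp [stepPair, h2, ih]

lemma getElem_psiB_odd (l : List MStep) (j : ℕ) :
    (psiB l)[2 * j + 1]? = l[j]?.map fun s => match s with | .D => false | _ => true := by
  induction l generalizing j with
  | nil => simp
  | cons s l ih =>
    cases j with
    | zero => cases s <;> simp [stepPair]
    | succ j =>
      have h2 : 2 * (j + 1) + 1 = (2 * j + 1) + 1 + 1 := by ring
      cases s <;> simp [stepPair, h2, ih]

/-- No peak at an even position. -/
def NoEvenPeak (w : List Bool) : Prop :=
  ∀ j, ¬ (w[2 * j]? = some true ∧ w[2 * j + 1]? = some false)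

lemma noEvenPeak_psiB (l : List MStep) : NoEvenPeak (psiB l) := by
  intro j ⟨h1, h2⟩
  rw [getElem_psiB_even] at h1
  rw [getElem_psiB_odd] at h2
  rcases hj : l[j]? with _ | s
  · simp [hj] at h1
  · rcases s <;> simp [hj] at h1 h2

lemma phiB_succ_cons (n : ℕ) (a b : Bool) (rest : List Bool) :
    phiB (n + 1) (a :: b :: rest) =
      (match a, b with
        | true, true => MStep.U
        | false, true => MStep.H
        | _, _ => MStep.D) :: phiB n rest := by
  unfold phiB
  rw [List.range_succ_eq_map, List.map_cons, List.map_map]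
  congr 1

lemma psiB_phiB (n : ℕ) (P : List Bool) (hlen : P.length = 2 * n) (hnp : NoEvenPeak P) :
    psiB (phiB n P) = P := by
  induction n generalizing P with
  | zero =>
    have hP : P = [] := List.length_eq_zero_iff.mp (by omega)
    subst hP
    rfl
  | succ n ih =>
    obtain ⟨a, b, rest, rfl⟩ : ∃ a b rest, P = a :: b :: rest := by
      rcases P with _ | ⟨a, _ | ⟨b, rest⟩⟩ <;> simp at hlen <;> try omega
      exact ⟨a, b, rest, rfl⟩
    have hr : rest.length = 2 * n := by simp at hlen; omega
    have hnp' : NoEvenPeak rest := by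
      intro j hj
      refine hnp (j + 1) ?_
      have h1 : 2 * (j + 1) = (2 * j) + 1 + 1 := by ring
      have h2 : 2 * (j + 1) + 1 = (2 * j + 1) + 1 + 1 := by ring
      simpa [h1, h2] using hj
    have hab : ¬ (a = true ∧ b = false) := by
      intro ⟨ha, hb⟩
      exact hnp 0 (by simp [ha, hb])
    rw [phiB_succ_cons]
    rcases a <;> rcases b <;> simp [stepPair, ih rest hr hnp'] at hab ⊢

lemma phiB_psiB (l : List MStep) (n : ℕ) (hlen : l.length = n) :
    phiB n (psiB l) = l := by
  subst hlen
  induction l with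
  | nil => rfl
  | cons s l ih =>
    have : psiB (s :: l) = (stepPair s)[0] :: (stepPair s)[1] :: psiB l := by
      cases s <;> rfl
    rw [List.length_cons, this, phiB_succ_cons, ih]
    cases s <;> rfl

lemma riordan_of_dyck (l : List MStep) (n : ℕ) (hlen : l.length = n)
    (hd : IsDyckPath n (psiB l)) : IsRiordan n l := by
  obtain ⟨hL, hT, hpre⟩ := hd
  have hpd : ∀ j, 0 ≤ pdepth (psiB l) j := by
    intro j
    have := hpre j
    unfold pdepth ycoord xcoord
    omega
  have hz : msum l = 0 := by
    have h1 := countT_psiB l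
    rw [hT] at h1
    omega
  have hprem : ∀ k, 0 ≤ msum (l.take k) := by
    intro k
    have := hpd (2 * k)
    rw [pdepth_psiB_even] at this
    omega
  refine ⟨⟨hlen, hz, hprem⟩, ?_⟩
  intro i hi h0
  have hilt : i < l.length := by
    by_contra hc
    rw [List.getElem?_eq_none (by omega)] at hi
    cases hi
  have hiv : l[i] = MStep.H := by
    rw [List.getElem?_eq_getElem hilt] at hi
    exact Option.some.inj hi
  have := hpd (2 * i + 1)
  rw [pdepth_psiB_odd l i hilt, hiv, h0] at this
  simp at this

lemma dyck_of_riordan (l : List MStep) (n : ℕ) (hlen : l.length = n)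
    (hr : IsRiordan n l) : IsDyckPath n (psiB l) := by
  obtain ⟨⟨_, hz, hpre⟩, hH⟩ := hr
  refine ⟨by simp [hlen], ?_, ?_⟩
  · have h1 := countT_psiB l
    rw [hz, hlen] at h1
    omega
  · intro j
    suffices h : 0 ≤ pdepth (psiB l) j by
      unfold pdepth ycoord xcoord at h
      omega
    rcases Nat.even_or_odd j with ⟨k, hk⟩ | ⟨k, hk⟩
    · rw [show j = 2 * k by omega, pdepth_psiB_even]
      have := hpre k
      omega
    · by_cases hk2 : k < l.length
      · rw [show j = 2 * k + 1 by omega, pdepth_psiB_odd l k hk2]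
        have h0 := hpre k
        rcases hs : l[k] with _ | _ | _
        · simp [hs]; omega
        · have hne := hH k (by rw [List.getElem?_eq_getElem hk2, hs])
          simp [hs]
          omega
        · have h1 := hpre (k + 1)
          rw [msum_take_succ l k hk2, hs] at h1
          simp [mval] at h1
          simp [hs]
          omega
      · have hfull : (psiB l).take j = psiB l :=
          List.take_of_length_le (by simp; omega)
        unfold pdepth ycoord xcoord
        rw [hfull]
        have h1 := countT_psiB l
        have h2 := countF_psiB l
        rw [hz] at h1 h2
        omega

lemma allPeaksEven_psiB (l : List MStep) (n : ℕ) (hlen : l.length = n)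
    (hr : IsRiordan n l) : AllPeaksEven (psiB l) := by
  intro i ⟨h1, h2⟩
  rcases Nat.even_or_odd i with ⟨j, hj⟩ | ⟨j, hj⟩
  · exfalso
    rw [show i = 2 * j by omega, getElem_psiB_even] at h1
    rw [show i + 1 = 2 * j + 1 by omega, getElem_psiB_odd] at h2
    rcases hjv : l[j]? with _ | s
    · simp [hjv] at h1
    · rcases s <;> simp [hjv] at h1 h2
  · have hi1 : i + 1 = 2 * (j + 1) := by omega
    have hd := dyck_of_riordan l n hlen hr
    have hx : xcoord (psiB l) (i + 1) ≤ ycoord (psiB l) (i + 1) := hd.2.2 (i + 1)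
    have hpd : pdepth (psiB l) (i + 1) = 2 * msum (l.take (j + 1)) := by
      rw [hi1]; exact pdepth_psiB_even l (j + 1)
    unfold pdepth at hpd
    suffices h : Even ((ycoord (psiB l) (i + 1) - xcoord (psiB l) (i + 1) : ℕ) : ℤ) by
      exact_mod_cast h
    rw [Nat.cast_sub hx, hpd]
    exact ⟨msum (l.take (j + 1)), by ring⟩

lemma noEvenPeak_of_dyck (P : List Bool) (n : ℕ) (hd : IsDyckPath n P)
    (he : AllPeaksEven P) : NoEvenPeak P := by
  intro j ⟨h1, h2⟩
  have hpk : IsPeak P (2 * j) := ⟨h1, h2⟩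
  have hev := he (2 * j) hpk
  have hlt : 2 * j + 1 < P.length := by
    by_contra hc
    rw [List.getElem?_eq_none (by omega)] at h2
    cases h2
  have hsum : ycoord P (2 * j + 1) + xcoord P (2 * j + 1) = 2 * j + 1 := by
    unfold ycoord xcoord
    rw [count_true_add_false, List.length_take]
    omega
  have hx : xcoord P (2 * j + 1) ≤ ycoord P (2 * j + 1) := hd.2.2 (2 * j + 1)
  obtain ⟨r, hr⟩ := hev
  omega

end PhiBAux

/-- `φ_B` is a bijection from Dyck paths of size `n` with all peaks at even height onto
Riordan paths of length `n`. -/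
theorem phiB_bijection (n : ℕ) :
    ∃ e : {P : List Bool // IsDyckPath n P ∧ AllPeaksEven P} ≃
          {l : List MStep // IsRiordan n l},
      ∀ P, (e P : List MStep) = phiB n P.1 := by
  classical
  have hlenphi : ∀ P : List Bool, (phiB n P).length = n := by
    intro P; simp [phiB]
  have key : ∀ P : List Bool, IsDyckPath n P → AllPeaksEven P →
      PhiBAux.psiB (phiB n P) = P := by
    intro P hd he
    exact PhiBAux.psiB_phiB n P hd.1 (PhiBAux.noEvenPeak_of_dyck P n hd he)
  refine ⟨{
    toFun := fun P => ⟨phiB n P.1, ?_⟩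
    invFun := fun l => ⟨PhiBAux.psiB l.1,
      PhiBAux.dyck_of_riordan l.1 n l.2.1.1 l.2,
      PhiBAux.allPeaksEven_psiB l.1 n l.2.1.1 l.2⟩
    left_inv := ?_
    right_inv := ?_ }, fun P => rfl⟩
  · obtain ⟨P, hd, he⟩ := P
    refine PhiBAux.riordan_of_dyck (phiB n P) n (hlenphi P) ?_
    rw [key P hd he]
    exact hd
  · rintro ⟨P, hd, he⟩
    exact Subtype.ext (key P hd he)
  · rintro ⟨l, hr⟩
    exact Subtype.ext (PhiBAux.phiB_psiB l n hr.1.1)
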